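/- Let H be any subgroup of GL_6(F_2) that is isomorphic to PSL_2(F_8) = SL_2(F_8). Then every element of H of order 7 acts fixed-point-freely on (F_2)^6, i.e. the only vector of (F_2)^6 fixed by such an element is the zero vector. -/

import Mathlib

set_option maxHeartbeats 1000000

open Polynomial Matrix

lemma sl2_conj_inv {K : Type*} [Field K] [CharP K 2]
    (x : Matrix.SpecialLinearGroup (Fin 2) K) :
    ∃ m : Matrix.SpecialLinearGroup (Fin 2) K, m * x * m⁻¹ = x⁻¹ := by
  have h2 : (2 : K) = 0 := by exact_mod_cast CharP.cast_eq_zero K 2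
  set a := (x : Matrix (Fin 2) (Fin 2) K) 0 0 with ha
  set b := (x : Matrix (Fin 2) (Fin 2) K) 0 1 with hb
  set c := (x : Matrix (Fin 2) (Fin 2) K) 1 0 with hc
  set d := (x : Matrix (Fin 2) (Fin 2) K) 1 1 with hd
  have hdet : a * d - b * c = 1 := by
    rw [ha, hb, hc, hd, ← Matrix.det_fin_two]; exact x.2
  have hx : (x : Matrix (Fin 2) (Fin 2) K) = !![a, b; c, d] := by
    rw [ha, hb, hc, hd]; exact (Matrix.etaExpand_eq (x : Matrix (Fin 2) (Fin 2) K)).symm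
  have hxinv : ((x⁻¹ : Matrix.SpecialLinearGroup (Fin 2) K) : Matrix (Fin 2) (Fin 2) K)
      = !![d, -b; -c, a] := by
    rw [Matrix.SpecialLinearGroup.coe_inv, hx, Matrix.adjugate_fin_two]; simp
  clear_value a b c d
  have key : ∀ (m : Matrix.SpecialLinearGroup (Fin 2) K),
      (m : Matrix (Fin 2) (Fin 2) K) * x = !![d, -b; -c, a] * m →
      m * x * m⁻¹ = x⁻¹ := by
    intro m hm
    rw [mul_inv_eq_iff_eq_mul]
    ext i j
    have : ((m * x : Matrix.SpecialLinearGroup (Fin 2) K) : Matrix (Fin 2) (Fin 2) K)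
        = ((x⁻¹ * m : Matrix.SpecialLinearGroup (Fin 2) K) : Matrix (Fin 2) (Fin 2) K) := by
      simp only [Matrix.SpecialLinearGroup.coe_mul, hxinv]
      exact hm
    exact congrFun (congrFun (by exact_mod_cast this) i) j
  rcases eq_or_ne c 0 with hc0 | hc0
  · rcases eq_or_ne b 0 with hb0 | hb0
    · refine ⟨⟨!![0, 1; 1, 0], by simp [Matrix.det_fin_two_of]; linear_combination -h2⟩, key _ ?_⟩
      rw [hx]
      ext i j
      fin_cases i <;> fin_cases j <;>
        simp [Matrix.mul_apply, Fin.sum_univ_two, hb0, hc0] <;>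
        first
          | rfl
          | linear_combination a * h2
          | linear_combination d * h2
          | linear_combination b * h2
          | linear_combination c * h2
    · have hq : b * b⁻¹ = 1 := mul_inv_cancel₀ hb0
      refine ⟨⟨!![1, 0; (a + d)/b, 1], by simp [Matrix.det_fin_two_of]⟩, key _ ?_⟩
      rw [hx]
      ext i j
      fin_cases i <;> fin_cases j <;>
        simp [Matrix.mul_apply, Fin.sum_univ_two, hc0] <;>
        first
          | rfl
          | ring1
          | linear_combination (a + d) * hq + a * h2
          | linear_combination (a + d) * hq + d * h2
          | linear_combination -((a + d) * hq) + a * h2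
          | linear_combination -((a + d) * hq) + d * h2
          | linear_combination b * h2
          | linear_combination a * h2
          | linear_combination d * h2
          | linear_combination (a + d) * hq + a * h2 + b * h2
          | linear_combination (a + d) * hq + d * h2 + b * h2
  · have hq : c * c⁻¹ = 1 := mul_inv_cancel₀ hc0
    refine ⟨⟨!![1, (a + d)/c; 0, 1], by simp [Matrix.det_fin_two_of]⟩, key _ ?_⟩
    rw [hx]
    ext i j
    fin_cases i <;> fin_cases j <;>
      simp [Matrix.mul_apply, Fin.sum_univ_two] <;>
      first
        | rfl
        | ring1
        | linear_combination (a + d) * hq + a * h2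
        | linear_combination (a + d) * hq + d * h2
        | linear_combination -((a + d) * hq) + a * h2
        | linear_combination -((a + d) * hq) + d * h2
        | linear_combination b * h2
        | linear_combination c * h2
        | linear_combination a * h2
        | linear_combination d * h2
        | linear_combination (a + d) * hq + a * h2 + c * h2
        | linear_combination (a + d) * hq + d * h2 + c * h2


lemma aux_restrict_aeval {F V : Type*} [Field F] [AddCommGroup V] [Module F V]
    (φ : Module.End F V) (p : Submodule F V) (h : ∀ x ∈ p, φ x ∈ p) (q : F[X]) (x : p) :
    ((Polynomial.aeval (φ.restrict h) q) x : V) = (Polynomial.aeval φ q) (x : V) := by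
  induction q using Polynomial.induction_on' with
  | add f g hf hg => simp [_root_.map_add, hf, hg]
  | monomial n a =>
      rw [Polynomial.aeval_monomial, Polynomial.aeval_monomial, Module.End.mul_apply,
        Module.End.mul_apply, Module.algebraMap_end_apply, Module.algebraMap_end_apply,
        Submodule.coe_smul, Module.End.pow_restrict, LinearMap.restrict_coe_apply]

lemma aux_deg_le_ker {F V : Type*} [Field F] [AddCommGroup V] [Module F V] [FiniteDimensional F V]
    (φ : Module.End F V) (q : F[X]) (hq : Irreducible q)
    (hne : LinearMap.ker (Polynomial.aeval φ q) ≠ ⊥) :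
    q.natDegree ≤ Module.finrank F (LinearMap.ker (Polynomial.aeval φ q)) := by
  set K := LinearMap.ker (Polynomial.aeval φ q) with hK
  have hstab : ∀ x ∈ K, φ x ∈ K := by
    intro x hx
    have comm : (Polynomial.aeval φ q) * φ = φ * (Polynomial.aeval φ q) := by
      have h1 : Polynomial.aeval φ (q * X) = Polynomial.aeval φ (X * q) := by rw [mul_comm]
      simpa [_root_.map_mul] using h1
    have h2 := congrArg (fun ψ : Module.End F V => ψ x) comm
    simp only [Module.End.mul_apply] at h2
    simp only [hK, LinearMap.mem_ker] at hx ⊢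
    rw [h2, hx, _root_.map_zero]
  haveI : Nontrivial K := Submodule.nontrivial_iff_ne_bot.mpr hne
  set ψ := φ.restrict hstab with hψ
  have hz : Polynomial.aeval ψ q = 0 := by
    apply LinearMap.ext
    intro x
    apply Subtype.ext
    rw [hψ]
    rw [aux_restrict_aeval]
    simpa using x.2
  have hdvd : minpoly F ψ ∣ q := minpoly.dvd F ψ hz
  obtain ⟨r, hr⟩ := hdvd
  have hint : IsIntegral F ψ := LinearMap.isIntegral ψ
  have hmpdegpos : 0 < (minpoly F ψ).natDegree := minpoly.natDegree_pos hint
  have hmp : q.natDegree = (minpoly F ψ).natDegree := by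
    rcases hq.isUnit_or_isUnit hr with hu | hu
    · exfalso
      have := Polynomial.natDegree_eq_zero_of_isUnit hu
      omega
    · obtain ⟨u, hu0, hu⟩ := Polynomial.isUnit_iff.mp hu
      rw [hr, ← hu, Polynomial.natDegree_mul_C (IsUnit.ne_zero hu0)]
  rw [hmp]
  calc (minpoly F ψ).natDegree
      ≤ (LinearMap.charpoly ψ).natDegree := by
        apply Polynomial.natDegree_le_of_dvd (LinearMap.minpoly_dvd_charpoly ψ)
        exact (LinearMap.charpoly_monic ψ).ne_zero
    _ = Module.finrank F K := LinearMap.charpoly_natDegree ψ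

lemma aux_irr1 : Irreducible (X^3 + X + 1 : (ZMod 2)[X]) := by
  have hdeg : (X^3 + X + 1 : (ZMod 2)[X]).natDegree = 3 := by compute_degree!
  have h0 : (X^3 + X + 1 : (ZMod 2)[X]) ≠ 0 := fun h => by simp [h] at hdeg
  rw [Polynomial.irreducible_iff_roots_eq_zero_of_degree_le_three (by omega) (le_of_eq hdeg)]
  rw [Multiset.eq_zero_iff_forall_notMem]
  intro a ha
  rw [Polynomial.mem_roots h0] at ha
  have := ha
  simp only [Polynomial.IsRoot, Polynomial.eval_add, Polynomial.eval_pow, Polynomial.eval_X,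
    Polynomial.eval_one] at this
  fin_cases a <;> revert this <;> decide

lemma aux_irr2 : Irreducible (X^3 + X^2 + 1 : (ZMod 2)[X]) := by
  have hdeg : (X^3 + X^2 + 1 : (ZMod 2)[X]).natDegree = 3 := by compute_degree!
  have h0 : (X^3 + X^2 + 1 : (ZMod 2)[X]) ≠ 0 := fun h => by simp [h] at hdeg
  rw [Polynomial.irreducible_iff_roots_eq_zero_of_degree_le_three (by omega) (le_of_eq hdeg)]
  rw [Multiset.eq_zero_iff_forall_notMem]
  intro a ha
  rw [Polynomial.mem_roots h0] at ha
  have := ha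
  simp only [Polynomial.IsRoot, Polynomial.eval_add, Polynomial.eval_pow, Polynomial.eval_X,
    Polynomial.eval_one] at this
  fin_cases a <;> revert this <;> decide

lemma aux_h2p : (2 : (ZMod 2)[X]) = 0 := by
  have h1 : ((2 : ℕ) : (ZMod 2)[X]) = Polynomial.C ((2 : ℕ) : ZMod 2) :=
    (Polynomial.C_eq_natCast 2).symm
  have h2 : ((2 : ℕ) : ZMod 2) = 0 := by decide
  rw [h2, _root_.map_zero] at h1
  exact_mod_cast h1

lemma aux_I1 : (X^5 + X^3 + X) * (X + 1) + (X^3 + X + 1) * (X^3 + X^2 + 1)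
    = (1 : (ZMod 2)[X]) := by
  linear_combination (X + X^2 + 2*X^3 + X^4 + X^5 + X^6 : (ZMod 2)[X]) * aux_h2p

lemma aux_I2 : X * (X^3 + X + 1) + (X + 1) * (X^3 + X^2 + 1) = (1 : (ZMod 2)[X]) := by
  linear_combination (X + X^2 + X^3 + X^4 : (ZMod 2)[X]) * aux_h2p

lemma aux_I3 : (X^3 + X + 1) * (X^3 + X^2 + 1) * (X + 1) = (X^7 - 1 : (ZMod 2)[X]) := by
  linear_combination (1 + X + X^2 + 2*X^3 + 2*X^4 + X^5 + X^6 : (ZMod 2)[X]) * aux_h2p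

/-- In any subgroup of `GL₆(F₂)` isomorphic to `PSL₂(F₈)`, every element of order `7`
acts fixed-point-freely on `(F₂)⁶`. -/
theorem stmt_18 (H : Subgroup (Matrix.GeneralLinearGroup (Fin 6) (ZMod 2)))
    (hH : Nonempty (H ≃* Matrix.SpecialLinearGroup (Fin 2) (GaloisField 2 3)))
    (g : Matrix.GeneralLinearGroup (Fin 6) (ZMod 2)) (hg : g ∈ H) (hord : orderOf g = 7)
    (v : Fin 6 → ZMod 2) (hv : Matrix.mulVec (g : Matrix (Fin 6) (Fin 6) (ZMod 2)) v = v) :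
    v = 0 := by
  classical
  obtain ⟨e⟩ := hH
  -- conjugating element inside H
  obtain ⟨m, hm⟩ := sl2_conj_inv (e ⟨g, hg⟩)
  set w : H := e.symm m with hwdef
  have hconjH : w * ⟨g, hg⟩ * w⁻¹ = (⟨g, hg⟩ : H)⁻¹ := by
    apply e.injective
    simp only [_root_.map_mul, _root_.map_inv, hwdef, MulEquiv.apply_symm_apply, hm]
  have hconj : (w : Matrix.GeneralLinearGroup (Fin 6) (ZMod 2)) * g * (w : _)⁻¹ = g⁻¹ := by
    have h1 := congrArg (Subgroup.subtype H) hconjH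
    simpa using h1
  -- move to endomorphisms
  set Φ : Matrix.GeneralLinearGroup (Fin 6) (ZMod 2) →*
      (Module.End (ZMod 2) (Fin 6 → ZMod 2))ˣ :=
    Units.map (Matrix.toLinAlgEquiv' (R := ZMod 2) (n := Fin 6)).toAlgHom.toRingHom.toMonoidHom
    with hΦdef
  set U := Φ g with hUdef
  set W := Φ (w : Matrix.GeneralLinearGroup (Fin 6) (ZMod 2)) with hWdef
  have hU7 : U ^ 7 = 1 := by
    rw [hUdef, ← _root_.map_pow, ← hord, pow_orderOf_eq_one g, _root_.map_one]
  have hWU : W * U * W⁻¹ = U⁻¹ := by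
    rw [hUdef, hWdef, ← _root_.map_inv, ← _root_.map_inv, ← _root_.map_mul, ← _root_.map_mul]
    exact congrArg Φ hconj
  set μ : Module.End (ZMod 2) (Fin 6 → ZMod 2) := (U : Module.End (ZMod 2) (Fin 6 → ZMod 2))
    with hμdef
  set μ' : Module.End (ZMod 2) (Fin 6 → ZMod 2) :=
    ((U⁻¹ : _ˣ) : Module.End (ZMod 2) (Fin 6 → ZMod 2)) with hμ'def
  set ν : Module.End (ZMod 2) (Fin 6 → ZMod 2) := (W : Module.End (ZMod 2) (Fin 6 → ZMod 2))
    with hνdef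
  set ν' : Module.End (ZMod 2) (Fin 6 → ZMod 2) :=
    ((W⁻¹ : _ˣ) : Module.End (ZMod 2) (Fin 6 → ZMod 2)) with hν'def
  have hμμ' : μ * μ' = 1 := U.mul_inv
  have hμ'μ : μ' * μ = 1 := U.inv_mul
  have hνν' : ν * ν' = 1 := W.mul_inv
  have hν'ν : ν' * ν = 1 := W.inv_mul
  have hcc : ν * μ * ν' = μ' := by
    have := congrArg (Units.val) hWU
    simpa [Units.val_mul] using this
  have hμ7 : μ ^ 7 = 1 := by
    rw [hμdef, ← Units.val_pow_eq_pow_val, hU7, Units.val_one]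
  have hvμ : μ v = v := by
    rw [hμdef, hUdef]
    show (Matrix.toLinAlgEquiv' (R := ZMod 2) (n := Fin 6)) (g : Matrix (Fin 6) (Fin 6) (ZMod 2)) v = v
    rw [Matrix.toLinAlgEquiv'_apply]
    exact hv
  -- polynomial setup
  set f1 : (ZMod 2)[X] := X^3 + X + 1 with hf1
  set f2 : (ZMod 2)[X] := X^3 + X^2 + 1 with hf2
  set K1 := LinearMap.ker (Polynomial.aeval μ f1) with hK1
  set K2 := LinearMap.ker (Polynomial.aeval μ f2) with hK2
  set KP := LinearMap.ker (Polynomial.aeval μ (f1 * f2)) with hKP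
  have haeval7 : Polynomial.aeval μ (f1 * f2 * (X + 1)) = 0 := by
    rw [hf1, hf2, aux_I3, map_sub, _root_.map_pow, Polynomial.aeval_X, _root_.map_one, hμ7,
      sub_self]
  have hK1le : K1 ≤ KP := by
    intro z hz
    rw [hK1, LinearMap.mem_ker] at hz
    rw [hKP, LinearMap.mem_ker, mul_comm f1 f2, _root_.map_mul, Module.End.mul_apply, hz,
      _root_.map_zero]
  have hK2le : K2 ≤ KP := by
    intro z hz
    rw [hK2, LinearMap.mem_ker] at hz
    rw [hKP, LinearMap.mem_ker, _root_.map_mul, Module.End.mul_apply, hz, _root_.map_zero]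
  have hneg : ∀ y : Fin 6 → ZMod 2, -y = y := by
    intro y; funext i; exact CharTwo.neg_eq _
  have hvK0 : Polynomial.aeval μ ((X + 1 : (ZMod 2)[X])) v = 0 := by
    rw [_root_.map_add, Polynomial.aeval_X, _root_.map_one, LinearMap.add_apply, hvμ,
      Module.End.one_apply]
    funext i
    exact CharTwo.add_self_eq_zero _
  have hsplit : ∀ z, Polynomial.aeval μ ((X + 1 : (ZMod 2)[X])) z = 0 →
      z ∈ KP → z = 0 := by
    intro z h0 hP
    rw [hKP, LinearMap.mem_ker] at hP
    have h1 : Polynomial.aeval μ ((X^5 + X^3 + X) * (X + 1) + f1 * f2) z = z := by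
      rw [hf1, hf2, aux_I1, _root_.map_one, Module.End.one_apply]
    rw [_root_.map_add, LinearMap.add_apply, _root_.map_mul, Module.End.mul_apply, h0,
      _root_.map_zero, hP, add_zero] at h1
    exact h1.symm
  -- the conjugation identity
  have hval : ∀ (A B : (Module.End (ZMod 2) (Fin 6 → ZMod 2))ˣ), A = B →
      (A : Module.End (ZMod 2) (Fin 6 → ZMod 2)) = B := fun A B h => congrArg Units.val h
  have hν3 : ν * μ^3 * ν' = μ'^3 := by
    have hu : W * U^3 * W⁻¹ = (U⁻¹)^3 := by
      have := conj_pow (a := W) (b := U) (i := 3)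
      rw [hWU] at this
      exact this.symm
    have := hval _ _ hu
    simpa [Units.val_mul, Units.val_pow_eq_pow_val] using this
  have hμ33 : μ^3 * μ'^3 = 1 := by
    have hu : U^3 * (U⁻¹)^3 = 1 := by group
    rw [hμdef, hμ'def, ← Units.val_pow_eq_pow_val, ← Units.val_pow_eq_pow_val, ← Units.val_mul,
      hu, Units.val_one]
  have hμ3μ' : μ^3 * μ' = μ^2 := by
    have hu : U^3 * U⁻¹ = U^2 := by group
    have := hval _ _ hu
    simpa [Units.val_mul, Units.val_pow_eq_pow_val] using this
  have hμ'33 : μ'^3 * μ^3 = 1 := by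
    have hu : (U⁻¹)^3 * U^3 = 1 := by group
    rw [hμdef, hμ'def, ← Units.val_pow_eq_pow_val, ← Units.val_pow_eq_pow_val, ← Units.val_mul,
      hu, Units.val_one]
  have hA : ν * (μ^3 + μ + 1) * ν' = μ'^3 + μ' + 1 := by
    calc ν * (μ^3 + μ + 1) * ν'
        = ν * μ^3 * ν' + ν * μ * ν' + ν * ν' := by noncomm_ring
      _ = μ'^3 + μ' + 1 := by rw [hν3, hcc, hνν']
  have hF2 : Polynomial.aeval μ f2 = μ^3 * ν * (Polynomial.aeval μ f1) * ν' := by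
    have e1 : Polynomial.aeval μ f1 = μ^3 + μ + 1 := by
      rw [hf1]; simp [_root_.map_add, _root_.map_pow, Polynomial.aeval_X, _root_.map_one]
    have e2 : Polynomial.aeval μ f2 = μ^3 + μ^2 + 1 := by
      rw [hf2]; simp [_root_.map_add, _root_.map_pow, Polynomial.aeval_X, _root_.map_one]
    rw [e1, e2]
    calc μ^3 + μ^2 + 1 = 1 + μ^2 + μ^3 := by noncomm_ring
      _ = μ^3 * μ'^3 + μ^3 * μ' + μ^3 := by rw [hμ33, hμ3μ']
      _ = μ^3 * (μ'^3 + μ' + 1) := by noncomm_ring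
      _ = μ^3 * (ν * (μ^3 + μ + 1) * ν') := by rw [hA]
      _ = μ^3 * ν * (μ^3 + μ + 1) * ν' := by noncomm_ring
  have happ : ∀ z, Polynomial.aeval μ f2 z
      = (μ^3 * ν) ((Polynomial.aeval μ f1) (ν' z)) := by
    intro z
    rw [hF2]
    simp [Module.End.mul_apply]
  have hLinv : (ν' * μ'^3) * (μ^3 * ν) = 1 := by
    calc (ν' * μ'^3) * (μ^3 * ν) = ν' * (μ'^3 * μ^3) * ν := by noncomm_ring
      _ = ν' * ν := by rw [hμ'33]; noncomm_ring
      _ = 1 := hν'ν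
  have hKcomap : K2 = Submodule.comap ν' K1 := by
    ext z
    simp only [hK2, hK1, LinearMap.mem_ker, Submodule.mem_comap]
    constructor
    · intro hz
      rw [happ] at hz
      have h5 : ((ν' * μ'^3) * (μ^3 * ν)) ((Polynomial.aeval μ f1) (ν' z)) = 0 := by
        rw [Module.End.mul_apply, hz, _root_.map_zero]
      rw [hLinv, Module.End.one_apply] at h5
      exact h5
    · intro hz
      rw [happ, hz, _root_.map_zero]
  set E : (Fin 6 → ZMod 2) ≃ₗ[ZMod 2] (Fin 6 → ZMod 2) :=
    LinearEquiv.ofLinear ν' ν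
      (by rw [← Module.End.mul_eq_comp, hν'ν]; rfl)
      (by rw [← Module.End.mul_eq_comp, hνν']; rfl) with hE
  have hKmap : K2 = Submodule.map (E.symm : (Fin 6 → ZMod 2) →ₗ[ZMod 2] (Fin 6 → ZMod 2)) K1 := by
    rw [hKcomap, ← Submodule.comap_equiv_eq_map_symm]
    rfl
  have hfr : Module.finrank (ZMod 2) K2 = Module.finrank (ZMod 2) K1 := by
    rw [hKmap, LinearEquiv.finrank_map_eq]
  by_cases hbot : K1 = ⊥
  · exfalso
    have hK2bot : K2 = ⊥ := by
      rw [hKmap, hbot, Submodule.map_bot]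
    have hKPbot : ∀ z, z ∈ KP → z = 0 := by
      intro z hz
      rw [hKP, LinearMap.mem_ker] at hz
      have h1 : Polynomial.aeval μ (X * f1 + (X + 1) * f2) z = z := by
        rw [hf1, hf2, aux_I2, _root_.map_one, Module.End.one_apply]
      have ht1 : Polynomial.aeval μ (X * f1) z ∈ K2 := by
        rw [hK2, LinearMap.mem_ker, ← Module.End.mul_apply, ← _root_.map_mul]
        have hpe : f2 * (X * f1) = X * (f1 * f2) := by ring
        rw [hpe, _root_.map_mul, Module.End.mul_apply, hz, _root_.map_zero]
      have ht2 : Polynomial.aeval μ ((X + 1) * f2) z ∈ K1 := by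
        rw [hK1, LinearMap.mem_ker, ← Module.End.mul_apply, ← _root_.map_mul]
        have hpe : f1 * ((X + 1) * f2) = (X + 1) * (f1 * f2) := by ring
        rw [hpe, _root_.map_mul, Module.End.mul_apply, hz, _root_.map_zero]
      rw [hK2bot, Submodule.mem_bot] at ht1
      rw [hbot, Submodule.mem_bot] at ht2
      rw [_root_.map_add, LinearMap.add_apply, ht1, ht2, add_zero] at h1
      exact h1.symm
    have hμ1 : μ = 1 := by
      apply LinearMap.ext
      intro z
      have hmem : Polynomial.aeval μ ((X + 1 : (ZMod 2)[X])) z ∈ KP := by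
        rw [hKP, LinearMap.mem_ker, ← Module.End.mul_apply, ← _root_.map_mul,
          haeval7, LinearMap.zero_apply]
      have h0 := hKPbot _ hmem
      rw [_root_.map_add, Polynomial.aeval_X, _root_.map_one, LinearMap.add_apply,
        Module.End.one_apply] at h0
      have := eq_neg_of_add_eq_zero_left h0
      rw [hneg] at this
      simpa using this
    have hU1 : U = 1 := Units.ext hμ1
    have hg1 : g = 1 := by
      have hinj : Function.Injective Φ := by
        apply Units.map_injective
        intro a b hab
        exact Matrix.toLinAlgEquiv'.injective hab
      apply hinj
      rw [← hUdef, hU1, _root_.map_one]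
    rw [hg1, orderOf_one] at hord
    omega
  · -- K1 nontrivial : dim count
    have hd1 : 3 ≤ Module.finrank (ZMod 2) K1 := by
      have hdeg : (f1 : (ZMod 2)[X]).natDegree = 3 := by rw [hf1]; compute_degree!
      have := aux_deg_le_ker μ f1 (hf1 ▸ aux_irr1) (hK1 ▸ hbot)
      rw [hdeg] at this
      exact hK1 ▸ this
    have hd2 : 3 ≤ Module.finrank (ZMod 2) K2 := by rw [hfr]; exact hd1
    have hinf : K1 ⊓ K2 = ⊥ := by
      rw [Submodule.eq_bot_iff]
      intro z hz
      obtain ⟨hz1, hz2⟩ := Submodule.mem_inf.mp hz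
      rw [hK1, LinearMap.mem_ker] at hz1
      rw [hK2, LinearMap.mem_ker] at hz2
      have h1 : Polynomial.aeval μ (X * f1 + (X + 1) * f2) z = z := by
        rw [hf1, hf2, aux_I2, _root_.map_one, Module.End.one_apply]
      rw [_root_.map_add, LinearMap.add_apply, _root_.map_mul, _root_.map_mul,
        Module.End.mul_apply, Module.End.mul_apply, hz1, hz2, _root_.map_zero, _root_.map_zero,
        add_zero] at h1
      exact h1.symm
    have hVfr : Module.finrank (ZMod 2) (Fin 6 → ZMod 2) = 6 := by
      simp [Module.finrank_pi]
    have hsum := Submodule.finrank_sup_add_finrank_inf_eq K1 K2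
    rw [hinf] at hsum
    simp only [finrank_bot, add_zero] at hsum
    have hle : Module.finrank (ZMod 2) ↥(K1 ⊔ K2) ≤ 6 :=
      le_trans (Submodule.finrank_le _) (le_of_eq hVfr)
    have htop : K1 ⊔ K2 = ⊤ := by
      apply Submodule.eq_top_of_finrank_eq
      rw [hVfr]
      omega
    have hvKP : v ∈ KP := by
      have : v ∈ K1 ⊔ K2 := htop ▸ Submodule.mem_top
      exact (sup_le hK1le hK2le) this
    exact hsplit v hvK0 hvKP
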